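/- Assume N_F > 1. Then every solution of the entomological model with M(0) ≥ 0 and F(0) > 0 converges as t → +∞ to the unique positive equilibrium (M*, F*), where F* = (N_F/(N_F+N_M))·(1/β)·ln N_F and M* = (N_M/(N_F+N_M))·(1/β)·ln N_F. -/

import Mathlib

open Filter Set

lemma deriv_mono_Icc {f f' : ℝ → ℝ} {a b : ℝ}
    (hd : ∀ t ∈ Set.Icc a b, HasDerivAt f (f' t) t)
    (h0 : ∀ t ∈ Set.Ioo a b, 0 ≤ f' t) (hab : a ≤ b) : f a ≤ f b := by
  have hmono := monotoneOn_of_deriv_nonneg (convex_Icc a b)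
    (fun t ht => (hd t ht).continuousAt.continuousWithinAt)
    (fun t ht => by
      rw [interior_Icc] at ht
      exact (hd t (Set.Ioo_subset_Icc_self ht)).differentiableAt.differentiableWithinAt)
    (fun t ht => by
      rw [interior_Icc] at ht
      rw [(hd t (Set.Ioo_subset_Icc_self ht)).deriv]; exact h0 t ht)
  exact hmono (Set.left_mem_Icc.2 hab) (Set.right_mem_Icc.2 hab) hab

lemma deriv_anti_Icc {f f' : ℝ → ℝ} {a b : ℝ}
    (hd : ∀ t ∈ Set.Icc a b, HasDerivAt f (f' t) t)
    (h0 : ∀ t ∈ Set.Ioo a b, f' t ≤ 0) (hab : a ≤ b) : f b ≤ f a := by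
  have hmono := antitoneOn_of_deriv_nonpos (convex_Icc a b)
    (fun t ht => (hd t ht).continuousAt.continuousWithinAt)
    (fun t ht => by
      rw [interior_Icc] at ht
      exact (hd t (Set.Ioo_subset_Icc_self ht)).differentiableAt.differentiableWithinAt)
    (fun t ht => by
      rw [interior_Icc] at ht
      rw [(hd t (Set.Ioo_subset_Icc_self ht)).deriv]; exact h0 t ht)
  exact hmono (Set.left_mem_Icc.2 hab) (Set.right_mem_Icc.2 hab) hab


lemma deriv_mono_Icc' {f f' : ℝ → ℝ} {a b : ℝ}
    (hcont : ContinuousOn f (Set.Icc a b))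
    (hd : ∀ t ∈ Set.Ioo a b, HasDerivAt f (f' t) t)
    (h0 : ∀ t ∈ Set.Ioo a b, 0 ≤ f' t) (hab : a ≤ b) : f a ≤ f b := by
  have hmono := monotoneOn_of_deriv_nonneg (convex_Icc a b) hcont
    (fun t ht => by
      rw [interior_Icc] at ht
      exact (hd t ht).differentiableAt.differentiableWithinAt)
    (fun t ht => by
      rw [interior_Icc] at ht
      rw [(hd t ht).deriv]; exact h0 t ht)
  exact hmono (Set.left_mem_Icc.2 hab) (Set.right_mem_Icc.2 hab) hab

lemma deriv_anti_Icc' {f f' : ℝ → ℝ} {a b : ℝ}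
    (hcont : ContinuousOn f (Set.Icc a b))
    (hd : ∀ t ∈ Set.Ioo a b, HasDerivAt f (f' t) t)
    (h0 : ∀ t ∈ Set.Ioo a b, f' t ≤ 0) (hab : a ≤ b) : f b ≤ f a := by
  have hmono := antitoneOn_of_deriv_nonpos (convex_Icc a b) hcont
    (fun t ht => by
      rw [interior_Icc] at ht
      exact (hd t ht).differentiableAt.differentiableWithinAt)
    (fun t ht => by
      rw [interior_Icc] at ht
      rw [(hd t ht).deriv]; exact h0 t ht)
  exact hmono (Set.left_mem_Icc.2 hab) (Set.right_mem_Icc.2 hab) hab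

lemma stay_below {f f' : ℝ → ℝ} {T A : ℝ}
    (hd : ∀ t, T ≤ t → HasDerivAt f (f' t) t)
    (hneg : ∀ t, T ≤ t → A ≤ f t → f' t ≤ 0)
    {t0 : ℝ} (ht0 : T ≤ t0) (h0 : f t0 ≤ A) :
    ∀ t, t0 ≤ t → f t ≤ A := by
  intro t1 ht1
  by_contra hgt
  push_neg at hgt
  have ht01 : t0 < t1 := by
    rcases eq_or_lt_of_le ht1 with h | h
    · exfalso; rw [← h] at hgt; linarith
    · exact h
  set Sset : Set ℝ := {t | t ∈ Set.Icc t0 t1 ∧ f t ≤ A} with hSset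
  have hne : t0 ∈ Sset := ⟨⟨le_refl _, le_of_lt ht01⟩, h0⟩
  have hbdd : BddAbove Sset := ⟨t1, fun x hx => hx.1.2⟩
  set s := sSup Sset with hs
  have hs0 : t0 ≤ s := le_csSup hbdd hne
  have hs1 : s ≤ t1 := csSup_le ⟨t0, hne⟩ (fun x hx => hx.1.2)
  have hTs : T ≤ s := le_trans ht0 hs0
  have hfs : f s ≤ A := by
    by_contra hfs
    push_neg at hfs
    have hcont : ContinuousAt f s := (hd s hTs).continuousAt
    have : ∀ᶠ x in nhds s, A < f x := continuousAt_const.eventually_lt hcont hfs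
    rcases Metric.eventually_nhds_iff.1 this with ⟨δ, hδ, hball⟩
    have hub : ∀ x ∈ Sset, x ≤ s - δ / 2 := by
      intro x hx
      by_contra hxs
      push_neg at hxs
      have hxle : x ≤ s := le_csSup hbdd hx
      have : dist x s < δ := by
        rw [Real.dist_eq, abs_of_nonpos (by linarith)]
        linarith
      exact absurd (hx.2) (not_le.2 (hball this))
    have : s ≤ s - δ / 2 := csSup_le ⟨t0, hne⟩ hub
    linarith
  have hst1 : s < t1 := by
    rcases eq_or_lt_of_le hs1 with h | h
    · exfalso; rw [h] at hfs; linarith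
    · exact h
  have habove : ∀ t, s < t → t ≤ t1 → A < f t := by
    intro t hst htt1
    by_contra hle
    push_neg at hle
    have : t ∈ Sset := ⟨⟨le_trans hs0 (le_of_lt hst), htt1⟩, hle⟩
    exact absurd (le_csSup hbdd this) (not_le.2 hst)
  have hanti : f t1 ≤ f s := by
    refine deriv_anti_Icc (f' := f') (fun t ht => hd t (le_trans hTs ht.1)) ?_ (le_of_lt hst1)
    intro t ht
    exact hneg t (le_trans hTs (le_of_lt ht.1)) (le_of_lt (habove t ht.1 (le_of_lt ht.2)))
  linarith

/-- If the derivative is `≤ -c` whenever `f ≥ A` (for `t ≥ T`), then eventually `f ≤ A`. -/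
lemma ev_le_of_deriv {f f' : ℝ → ℝ} {T A c : ℝ} (hc : 0 < c)
    (hd : ∀ t, T ≤ t → HasDerivAt f (f' t) t)
    (hneg : ∀ t, T ≤ t → A ≤ f t → f' t ≤ -c) :
    ∀ᶠ t in Filter.atTop, f t ≤ A := by
  have hlin : ∀ t : ℝ, HasDerivAt (fun x : ℝ => c * x) c t := fun t => by
    simpa using (hasDerivAt_id t).const_mul c
  have hreach : ∃ t0, T ≤ t0 ∧ f t0 ≤ A := by
    by_contra h
    push_neg at h
    have h1 : A < f T := h T le_rfl
    have hXnn : 0 ≤ (f T - A) / c := div_nonneg (by linarith) hc.le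
    obtain ⟨t1, ht1def⟩ : ∃ t1 : ℝ, t1 = T + (f T - A) / c + 1 := ⟨_, rfl⟩
    have hT1 : T ≤ t1 := by rw [ht1def]; linarith
    have hdec : f t1 + c * t1 ≤ f T + c * T := by
      refine deriv_anti_Icc (f := fun t => f t + c * t) (f' := fun t => f' t + c)
        (fun t ht => (hd t ht.1).add (hlin t)) ?_ hT1
      intro t ht
      have h2 := hneg t (le_of_lt ht.1) (le_of_lt (h t (le_of_lt ht.1)))
      show f' t + c ≤ 0
      linarith
    have h2 : A < f t1 := h t1 hT1
    have hct1 : c * t1 = c * T + (f T - A) + c := by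
      rw [ht1def]; field_simp
    linarith
  obtain ⟨t0, ht0, hft0⟩ := hreach
  refine Filter.eventually_atTop.2 ⟨t0, ?_⟩
  intro t ht
  exact stay_below hd (fun t ht hA => le_trans (hneg t ht hA) (by linarith)) ht0 hft0 t ht

/-- If the derivative is `≥ c` whenever `f ≤ A` (for `t ≥ T`), then eventually `f ≥ A`. -/
lemma ev_ge_of_deriv {f f' : ℝ → ℝ} {T A c : ℝ} (hc : 0 < c)
    (hd : ∀ t, T ≤ t → HasDerivAt f (f' t) t)
    (hpos : ∀ t, T ≤ t → f t ≤ A → c ≤ f' t) :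
    ∀ᶠ t in Filter.atTop, A ≤ f t := by
  have := ev_le_of_deriv (f := fun t => -f t) (f' := fun t => -f' t) (T := T) (A := -A) hc
    (fun t ht => (hd t ht).neg)
    (fun t ht hA => by
      have hA' : -A ≤ -f t := hA
      have h2 := hpos t ht (by linarith)
      show -f' t ≤ -c
      linarith)
  filter_upwards [this] with t ht
  have ht' : -f t ≤ -A := ht
  linarith

/-- If the derivative is `≥ lam * f` whenever `f ≤ A` (for `t ≥ T`), and `f` is positive,
then eventually `f ≥ A`. -/
lemma ev_ge_of_deriv_mult {f f' : ℝ → ℝ} {T A lam : ℝ} (hlam : 0 < lam)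
    (hd : ∀ t, T ≤ t → HasDerivAt f (f' t) t)
    (hfpos : ∀ t, T ≤ t → 0 < f t)
    (h : ∀ t, T ≤ t → f t ≤ A → lam * f t ≤ f' t) :
    ∀ᶠ t in Filter.atTop, A ≤ f t := by
  have hexp : ∀ (a t : ℝ), HasDerivAt (fun x : ℝ => Real.exp (a * x)) (a * Real.exp (a * t)) t :=
    fun a t => by simpa [mul_comm] using ((hasDerivAt_id t).const_mul a).exp
  have hreach : ∃ t0, T ≤ t0 ∧ A ≤ f t0 := by
    by_contra hcon
    push_neg at hcon
    have hfT : 0 < f T := hfpos T le_rfl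
    have hA : 0 < A := lt_trans hfT (hcon T le_rfl)
    obtain ⟨L, hLdef⟩ : ∃ L : ℝ, L = max (Real.log (A / f T)) 0 := ⟨_, rfl⟩
    have hLlog : Real.log (A / f T) ≤ L := hLdef ▸ le_max_left _ _
    have hLnn : 0 ≤ L := hLdef ▸ le_max_right _ _
    obtain ⟨t1, ht1def⟩ : ∃ t1 : ℝ, t1 = T + (L + 1) / lam := ⟨_, rfl⟩
    have hT1 : T ≤ t1 := by
      rw [ht1def]
      have : 0 ≤ (L + 1) / lam := div_nonneg (by linarith) hlam.le
      linarith
    -- g t = exp(-lam t) * f t is monotone on [T, t1]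
    have hgmono : Real.exp (-lam * T) * f T ≤ Real.exp (-lam * t1) * f t1 := by
      refine deriv_mono_Icc (f := fun t => Real.exp (-lam * t) * f t)
        (f' := fun t => (-lam) * Real.exp (-lam * t) * f t + Real.exp (-lam * t) * f' t)
        (fun t ht => ((hexp (-lam) t).mul (hd t ht.1)).congr_deriv (by ring)) ?_ hT1
      intro t ht
      have h1 := h t ht.1.le (le_of_lt (hcon t ht.1.le))
      have h2 : 0 < Real.exp (-lam * t) := Real.exp_pos _
      have h3 : 0 ≤ Real.exp (-lam * t) * (f' t - lam * f t) :=
        mul_nonneg h2.le (by linarith)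
      show 0 ≤ -lam * Real.exp (-lam * t) * f t + Real.exp (-lam * t) * f' t
      nlinarith
    -- multiply by exp (lam * t1)
    have hkey : Real.exp (lam * (t1 - T)) * f T ≤ f t1 := by
      have h4 := mul_le_mul_of_nonneg_left hgmono (Real.exp_pos (lam * t1)).le
      have e1 : Real.exp (lam * t1) * (Real.exp (-lam * t1) * f t1) = f t1 := by
        rw [← mul_assoc, ← Real.exp_add]; simp
      have e2 : Real.exp (lam * t1) * (Real.exp (-lam * T) * f T)
          = Real.exp (lam * (t1 - T)) * f T := by
        rw [← mul_assoc, ← Real.exp_add]; ring_nf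
      rw [e1, e2] at h4
      exact h4
    have hlt : A < Real.exp (lam * (t1 - T)) * f T := by
      have e3 : lam * (t1 - T) = L + 1 := by
        rw [ht1def]; field_simp; ring
      rw [e3]
      have h5 : Real.log (A / f T) + 1 ≤ L + 1 := by linarith
      have h6 : Real.exp (Real.log (A / f T) + 1) ≤ Real.exp (L + 1) := Real.exp_le_exp.2 h5
      have h7 : Real.exp (Real.log (A / f T) + 1) = A / f T * Real.exp 1 := by
        rw [Real.exp_add, Real.exp_log (div_pos hA hfT)]
      have h8 : (1 : ℝ) < Real.exp 1 := by
        have := Real.add_one_le_exp (1 : ℝ); linarith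
      have h9 : A < A / f T * Real.exp 1 * f T := by
        have e4 : A / f T * Real.exp 1 * f T = A * Real.exp 1 := by
          field_simp
        rw [e4]; nlinarith
      calc A < A / f T * Real.exp 1 * f T := h9
        _ = Real.exp (Real.log (A / f T) + 1) * f T := by rw [h7]
        _ ≤ Real.exp (L + 1) * f T := by
            exact mul_le_mul_of_nonneg_right h6 hfT.le
    have := hcon t1 hT1
    linarith [hkey, hlt]
  obtain ⟨t0, ht0, hft0⟩ := hreach
  refine Filter.eventually_atTop.2 ⟨t0, ?_⟩
  intro t ht
  have := stay_below (f := fun t => -f t) (f' := fun t => -f' t) (T := T) (A := -A)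
    (fun t ht => (hd t ht).neg)
    (fun t htT hAf => by
      have hAf' : -A ≤ -f t := hAf
      have h1 := h t htT (by linarith)
      have h2 := hfpos t htT
      show -f' t ≤ 0
      nlinarith)
    ht0 (by show -f t0 ≤ -A; linarith) t ht
  have : -f t ≤ -A := this
  linarith

lemma hasDerivAt_exp_mul (a t : ℝ) :
    HasDerivAt (fun x : ℝ => Real.exp (a * x)) (a * Real.exp (a * t)) t := by
  simpa [mul_comm] using ((hasDerivAt_id t).const_mul a).exp

lemma mul_exp_neg_le (y : ℝ) (hy : 0 ≤ y) : y * Real.exp (-y) ≤ Real.exp (-1) := by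
  have h := Real.add_one_le_exp (y - 1)
  have h2 : y ≤ Real.exp (y - 1) := by linarith
  calc y * Real.exp (-y) ≤ Real.exp (y - 1) * Real.exp (-y) :=
        mul_le_mul_of_nonneg_right h2 (Real.exp_pos _).le
    _ = Real.exp (-1) := by rw [← Real.exp_add]; ring_nf

set_option maxHeartbeats 4000000 in
theorem stmt_2 (r ρ β μM μF : ℝ)
    (hr0 : 0 < r) (hr1 : r < 1) (hρ : 0 < ρ) (hβ : 0 < β)
    (hμM : 0 < μM) (hμF : 0 < μF) (hμ : μF ≤ μM)
    (hNF : 1 < (1 - r) * ρ / μF)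
    (M F : ℝ → ℝ)
    (hMnn : ∀ t, 0 ≤ t → 0 ≤ M t) (hFnn : ∀ t, 0 ≤ t → 0 ≤ F t)
    (hM0 : 0 ≤ M 0) (hF0 : 0 < F 0)
    (hdM : ∀ t, 0 ≤ t →
      HasDerivAt M (r * ρ * F t * Real.exp (-(β * (M t + F t))) - μM * M t) t)
    (hdF : ∀ t, 0 ≤ t →
      HasDerivAt F ((1 - r) * ρ * F t * Real.exp (-(β * (M t + F t))) - μF * F t) t) :
    Filter.Tendsto M Filter.atTop
      (nhds ((r * ρ / μM) / ((1 - r) * ρ / μF + r * ρ / μM) * (1 / β) *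
        Real.log ((1 - r) * ρ / μF))) ∧
    Filter.Tendsto F Filter.atTop
      (nhds (((1 - r) * ρ / μF) / ((1 - r) * ρ / μF + r * ρ / μM) * (1 / β) *
        Real.log ((1 - r) * ρ / μF))) := by
  have h1r : 0 < 1 - r := by linarith
  have hNF0 : 0 < (1 - r) * ρ / μF := by positivity
  obtain ⟨q, hqdef⟩ : ∃ q : ℝ, q = r / (1 - r) := ⟨_, rfl⟩
  have hq : 0 < q := by rw [hqdef]; positivity
  obtain ⟨k, hkdef⟩ : ∃ k : ℝ, k = q * (μM - μF) := ⟨_, rfl⟩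
  have hk : 0 ≤ k := by rw [hkdef]; exact mul_nonneg hq.le (by linarith)
  obtain ⟨lnN, hlnNdef⟩ : ∃ x : ℝ, x = Real.log ((1 - r) * ρ / μF) := ⟨_, rfl⟩
  have hlnN : 0 < lnN := by rw [hlnNdef]; exact Real.log_pos hNF
  obtain ⟨Fst, hFstdef⟩ : ∃ x : ℝ, x = ((1 - r) * ρ / μF) / ((1 - r) * ρ / μF + r * ρ / μM)
      * (1 / β) * Real.log ((1 - r) * ρ / μF) := ⟨_, rfl⟩
  obtain ⟨Mst, hMstdef⟩ : ∃ x : ℝ, x = (r * ρ / μM) / ((1 - r) * ρ / μF + r * ρ / μM)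
      * (1 / β) * Real.log ((1 - r) * ρ / μF) := ⟨_, rfl⟩
  have hDpos : 0 < (1 - r) * ρ / μF + r * ρ / μM := by positivity
  have hq1 : q * (1 - r) = r := by rw [hqdef]; field_simp
  have hD2 : 0 < (1 - r) * μM + r * μF := by positivity
  have e1 : (q + 1) - k / μM = ((1 - r) * μM + r * μF) / ((1 - r) * μM) := by
    rw [hkdef, hqdef]; field_simp; ring
  have e2 : ((1 - r) * ρ / μF) / ((1 - r) * ρ / μF + r * ρ / μM)
      = (1 - r) * μM / ((1 - r) * μM + r * μF) := by
    rw [div_eq_div_iff hDpos.ne' hD2.ne']; field_simp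
  have hP : 0 < (q + 1) - k / μM := by
    rw [e1]; positivity
  have hEQ : β * ((q + 1) - k / μM) * Fst = lnN := by
    rw [hFstdef, ← hlnNdef, e1, e2]; field_simp
  have hMstid : Mst = q * Fst - k * (Fst / μM) := by
    rw [hMstdef, hFstdef, hkdef, hqdef, ← hlnNdef]
    field_simp
    ring
  -- canonical derivative function for F
  obtain ⟨Fd, hFddef⟩ : ∃ f : ℝ → ℝ,
      f = fun t => (1-r)*ρ*F t*Real.exp (-(β*(M t + F t))) - μF*F t := ⟨_, rfl⟩
  have hdF' : ∀ t, 0 ≤ t → HasDerivAt F (Fd t) t := by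
    intro t ht; rw [hFddef]; exact hdF t ht
  have hexpid : ∀ x : ℝ, (1-r)*ρ*Real.exp (-x) = μF * Real.exp (lnN - x) := by
    intro x
    rw [hlnNdef, Real.exp_sub, Real.exp_log hNF0, Real.exp_neg]
    field_simp
  have hFdid : ∀ t : ℝ, Fd t = μF * F t * (Real.exp (lnN - β*(M t + F t)) - 1) := by
    intro t
    have h := hexpid (β*(M t + F t))
    rw [hFddef]
    show (1-r)*ρ*F t*Real.exp (-(β*(M t+F t))) - μF*F t = _
    linear_combination (F t) * h
  -- positivity of F
  have hFpos : ∀ t, 0 ≤ t → 0 < F t := by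
    intro t ht
    have key : Real.exp (μF*0) * F 0 ≤ Real.exp (μF*t) * F t := by
      refine deriv_mono_Icc (f := fun s => Real.exp (μF*s) * F s)
        (f' := fun s => μF * Real.exp (μF*s) * F s + Real.exp (μF*s) * Fd s)
        (fun s hs => ((hasDerivAt_exp_mul μF s).mul (hdF' s hs.1)).congr_deriv (by ring)) ?_ ht
      intro s hs
      have hFs := hFnn s hs.1.le
      rw [hFddef]
      show 0 ≤ μF * Real.exp (μF*s) * F s
        + Real.exp (μF*s) * ((1-r)*ρ*F s*Real.exp (-(β*(M s + F s))) - μF*F s)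
      have heq : μF * Real.exp (μF*s) * F s
          + Real.exp (μF*s) * ((1-r)*ρ*F s*Real.exp (-(β*(M s+F s))) - μF*F s)
          = Real.exp (μF*s) * ((1-r)*ρ*F s*Real.exp (-(β*(M s+F s)))) := by ring
      rw [heq]
      exact mul_nonneg (Real.exp_pos _).le
        (mul_nonneg (mul_nonneg (mul_nonneg h1r.le hρ.le) hFs) (Real.exp_pos _).le)
    have h2 : 0 < Real.exp (μF*0) * F 0 := by positivity
    by_contra hneg
    push_neg at hneg
    have : Real.exp (μF*t) * F t ≤ 0 :=
      mul_nonpos_iff.2 (Or.inl ⟨(Real.exp_pos _).le, hneg⟩)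
    linarith
  -- upper bound B for M + F
  obtain ⟨K, hKdef⟩ : ∃ K : ℝ, K = ρ * Real.exp (-1) / (β * μF) := ⟨_, rfl⟩
  have hK : 0 < K := by rw [hKdef]; positivity
  have hFE : ∀ t, 0 ≤ t → ρ * (F t * Real.exp (-(β*(M t + F t)))) ≤ μF * K := by
    intro t ht
    have h1 : β * F t * Real.exp (-(β * F t)) ≤ Real.exp (-1) := by
      exact mul_exp_neg_le (β * F t) (mul_nonneg hβ.le (hFnn t ht))
    have h2 : Real.exp (-(β*(M t + F t))) ≤ Real.exp (-(β * F t)) := by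
      apply Real.exp_le_exp.2
      nlinarith [hMnn t ht]
    have h3 : F t * Real.exp (-(β*(M t+F t))) ≤ F t * Real.exp (-(β*F t)) :=
      mul_le_mul_of_nonneg_left h2 (hFnn t ht)
    have h4 : F t * Real.exp (-(β*F t)) ≤ Real.exp (-1)/β := by
      rw [le_div_iff₀ hβ]
      nlinarith [h1]
    have h5 : ρ * (Real.exp (-1)/β) = μF * K := by rw [hKdef]; field_simp
    nlinarith [h3, h4, hρ]
  have hSB : ∀ t, 0 ≤ t → M t + F t ≤ K + |M 0 + F 0 - K| := by
    intro t ht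
    have key : Real.exp (μF*t) * (M t + F t - K) ≤ Real.exp (μF*0) * (M 0 + F 0 - K) := by
      refine deriv_anti_Icc (f := fun s => Real.exp (μF*s) * (M s + F s - K))
        (f' := fun s => μF * Real.exp (μF*s) * (M s + F s - K)
          + Real.exp (μF*s) * ((r*ρ*F s*Real.exp (-(β*(M s + F s))) - μM*M s)
            + ((1-r)*ρ*F s*Real.exp (-(β*(M s + F s))) - μF*F s)))
        (fun s hs => ((hasDerivAt_exp_mul μF s).mul
          (((hdM s hs.1).add (hdF s hs.1)).sub_const K)).congr_deriv (by simp only [Pi.add_apply])) ?_ ht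
      intro s hs
      have h5 := hFE s hs.1.le
      have h6 := hMnn s hs.1.le
      have h7 : 0 ≤ Real.exp (μF*s) := (Real.exp_pos _).le
      show μF * Real.exp (μF*s) * (M s + F s - K)
          + Real.exp (μF*s) * ((r*ρ*F s*Real.exp (-(β*(M s + F s))) - μM*M s)
            + ((1-r)*ρ*F s*Real.exp (-(β*(M s + F s))) - μF*F s)) ≤ 0
      have hinner : μF * (M s + F s - K) + ((r*ρ*F s*Real.exp (-(β*(M s + F s))) - μM*M s)
          + ((1-r)*ρ*F s*Real.exp (-(β*(M s + F s))) - μF*F s)) ≤ 0 := by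
        nlinarith [h5, h6, mul_nonneg (sub_nonneg.2 hμ) h6]
      have heq : μF * Real.exp (μF*s) * (M s + F s - K)
          + Real.exp (μF*s) * ((r*ρ*F s*Real.exp (-(β*(M s + F s))) - μM*M s)
            + ((1-r)*ρ*F s*Real.exp (-(β*(M s + F s))) - μF*F s))
          = Real.exp (μF*s) * (μF * (M s + F s - K)
            + ((r*ρ*F s*Real.exp (-(β*(M s + F s))) - μM*M s)
            + ((1-r)*ρ*F s*Real.exp (-(β*(M s + F s))) - μF*F s))) := by ring
      rw [heq]
      exact mul_nonpos_iff.2 (Or.inl ⟨h7, hinner⟩)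
    rcases le_or_gt (M t + F t) K with h | h
    · have := abs_nonneg (M 0 + F 0 - K)
      linarith
    · have hexp1 : (1:ℝ) ≤ Real.exp (μF*t) := by
        rw [← Real.exp_zero]
        exact Real.exp_le_exp.2 (by positivity)
      have h8 : M t + F t - K ≤ Real.exp (μF*t) * (M t + F t - K) :=
        le_mul_of_one_le_left (by linarith) hexp1
      have h9 : Real.exp (μF*0) * (M 0 + F 0 - K) ≤ |M 0 + F 0 - K| := by
        have : Real.exp (μF*0) = 1 := by norm_num
        rw [this, one_mul]
        exact le_abs_self _
      linarith
  obtain ⟨B, hBdef⟩ : ∃ B : ℝ, B = K + |M 0 + F 0 - K| := ⟨_, rfl⟩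
  have hFB : ∀ t, 0 ≤ t → F t ≤ B := by
    intro t ht
    have h1 := hSB t ht
    have h2 := hMnn t ht
    rw [hBdef]; linarith
  -- the auxiliary integral
  obtain ⟨Cf, hCfdef⟩ : ∃ f : ℝ → ℝ,
      f = fun t => ∫ s in (0:ℝ)..t, Real.exp (μM*s) * F s := ⟨_, rfl⟩
  have hcontig : ∀ x : ℝ, 0 ≤ x → ContinuousAt (fun s => Real.exp (μM*s) * F s) x := by
    intro x hx
    exact ((Real.continuous_exp.comp (continuous_const.mul continuous_id)).continuousAt).mul
      (hdF x hx).continuousAt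
  have hintcont : ∀ b : ℝ, 0 ≤ b →
      ContinuousOn (fun s => Real.exp (μM*s) * F s) (Set.uIcc 0 b) := by
    intro b hb
    rw [Set.uIcc_of_le hb]
    intro s hs
    exact (hcontig s hs.1).continuousWithinAt
  have hCfd : ∀ t, 0 < t → HasDerivAt Cf (Real.exp (μM*t) * F t) t := by
    intro t ht
    rw [hCfdef]
    exact intervalIntegral.integral_hasDerivAt_right
      ((hintcont t ht.le).intervalIntegrable)
      (ContinuousAt.stronglyMeasurableAtFilter isOpen_Ioi
        (fun x hx => hcontig x (le_of_lt (Set.mem_Ioi.mp hx))) t ht)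
      (hcontig t ht.le)
  have hCfcont : ∀ b, 0 ≤ b → ContinuousOn Cf (Set.Icc 0 b) := by
    intro b hb
    rw [hCfdef]
    have h := intervalIntegral.continuousOn_primitive_interval' (μ := MeasureTheory.volume)
      ((hintcont b hb).intervalIntegrable) Set.left_mem_uIcc
    rwa [Set.uIcc_of_le hb] at h
  obtain ⟨c, hcdef⟩ : ∃ f : ℝ → ℝ, f = fun t => Real.exp (-μM*t) * Cf t := ⟨_, rfl⟩
  have hee : ∀ t : ℝ, Real.exp (-μM*t) * Real.exp (μM*t) = 1 := by
    intro t
    rw [← Real.exp_add]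
    have h : -μM*t + μM*t = 0 := by ring
    rw [h, Real.exp_zero]
  have hcd : ∀ t, 0 < t → HasDerivAt c (F t - μM * c t) t := by
    intro t ht
    have h := ((hasDerivAt_exp_mul (-μM) t).mul (hCfd t ht)).congr_deriv
      (show -μM * Real.exp (-μM*t) * Cf t + Real.exp (-μM*t) * (Real.exp (μM*t)*F t)
          = F t - μM * (Real.exp (-μM*t) * Cf t) from by linear_combination (F t) * hee t)
    rw [hcdef]
    exact h
  have hcnn : ∀ t, 0 ≤ t → 0 ≤ c t := by
    intro t ht
    rw [hcdef]
    show 0 ≤ Real.exp (-μM*t) * Cf t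
    apply mul_nonneg (Real.exp_pos _).le
    rw [hCfdef]
    show 0 ≤ ∫ s in (0:ℝ)..t, Real.exp (μM*s) * F s
    apply intervalIntegral.integral_nonneg ht
    intro u hu
    exact mul_nonneg (Real.exp_pos _).le (hFnn u hu.1)
  -- the representation of M in terms of F and c
  have hHconst : ∀ t, 0 ≤ t →
      Real.exp (μM*t) * (M t - q*F t) + k * Cf t = M 0 - q*F 0 := by
    intro t ht
    obtain ⟨H, hHdef⟩ : ∃ f : ℝ → ℝ,
        f = fun s => Real.exp (μM*s) * (M s - q*F s) + k * Cf s := ⟨_, rfl⟩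
    have hHd : ∀ s, 0 < s → HasDerivAt H 0 s := by
      intro s hs
      rw [hHdef]
      refine (((hasDerivAt_exp_mul μM s).mul
        ((hdM s hs.le).sub ((hdF s hs.le).const_mul q))).add
        ((hCfd s hs).const_mul k)).congr_deriv ?_
      have hk1 : k = q*μM - q*μF := by rw [hkdef]; ring
      simp only [Pi.sub_apply]
      linear_combination (-(Real.exp (μM*s) * ρ * F s * Real.exp (-(β*(M s + F s))))) * hq1
        + (Real.exp (μM*s) * F s) * hk1
    have hHcont : ContinuousOn H (Set.Icc 0 t) := by
      rw [hHdef]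
      apply ContinuousOn.add
      · apply ContinuousOn.mul
        · exact (Real.continuous_exp.comp (continuous_const.mul continuous_id)).continuousOn
        · intro s hs
          exact ((hdM s hs.1).continuousAt.sub
            ((hdF s hs.1).continuousAt.const_mul q)).continuousWithinAt
      · exact continuousOn_const.mul (hCfcont t ht)
    have h1 : H t ≤ H 0 := deriv_anti_Icc' (f' := fun _ => (0:ℝ)) hHcont
      (fun s hs => hHd s hs.1) (fun s _ => le_refl (0:ℝ)) ht
    have h2 : H 0 ≤ H t := deriv_mono_Icc' (f' := fun _ => (0:ℝ)) hHcont
      (fun s hs => hHd s hs.1) (fun s _ => le_refl (0:ℝ)) ht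
    have h3 : H t = H 0 := le_antisymm h1 h2
    have h4 : H 0 = M 0 - q*F 0 := by
      rw [hHdef]
      show Real.exp (μM*0)*(M 0 - q*F 0) + k * Cf 0 = _
      have hCf0 : Cf 0 = 0 := by
        rw [hCfdef]
        exact intervalIntegral.integral_same
      rw [hCf0]
      norm_num
    rw [h4] at h3
    rw [hHdef] at h3
    exact h3
  have hrep : ∀ t, 0 ≤ t → M t = q*F t + Real.exp (-μM*t)*(M 0 - q*F 0) - k * c t := by
    intro t ht
    have e := hHconst t ht
    have h := hee t
    rw [hcdef]
    show M t = q*F t + Real.exp (-μM*t)*(M 0 - q*F 0) - k * (Real.exp (-μM*t) * Cf t)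
    linear_combination Real.exp (-μM*t) * e - (M t - q*F t) * h
  -- the shifted coordinate w
  obtain ⟨w, hwdef⟩ : ∃ f : ℝ → ℝ,
      f = fun t => Real.exp (-μM*t)*(M 0 - q*F 0) - k * c t := ⟨_, rfl⟩
  have hSid : ∀ t, 0 ≤ t → M t + F t = (q+1)*F t + w t := by
    intro t ht
    rw [hwdef]
    show M t + F t = (q+1)*F t + (Real.exp (-μM*t)*(M 0 - q*F 0) - k * c t)
    have h := hrep t ht
    linarith
  -- the decaying term
  have hαdec : Filter.Tendsto (fun t => Real.exp (-μM*t)*(M 0 - q*F 0))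
      Filter.atTop (nhds 0) := by
    have h0 : Filter.Tendsto (fun t : ℝ => μM*t) Filter.atTop Filter.atTop :=
      Filter.Tendsto.const_mul_atTop hμM tendsto_id
    have h1 : Filter.Tendsto (fun t : ℝ => -μM*t) Filter.atTop Filter.atBot := by
      have h2 := tendsto_neg_atTop_atBot.comp h0
      refine h2.congr (fun t => ?_)
      show -(μM*t) = -μM*t
      ring
    have h2 : Filter.Tendsto (fun t : ℝ => Real.exp (-μM*t)) Filter.atTop (nhds 0) :=
      Real.tendsto_exp_atBot.comp h1
    simpa using h2.mul_const (M 0 - q*F 0)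
  -- boundedness facts
  have hFevnn : ∀ᶠ t in Filter.atTop, 0 ≤ F t := by
    filter_upwards [Filter.eventually_ge_atTop (0:ℝ)] with t ht
    exact hFnn t ht
  have hFevB : ∀ᶠ t in Filter.atTop, F t ≤ B := by
    filter_upwards [Filter.eventually_ge_atTop (0:ℝ)] with t ht
    exact hFB t ht
  have hbddA : Filter.IsBoundedUnder (· ≤ ·) Filter.atTop F := ⟨B, Filter.eventually_map.2 hFevB⟩
  have hbddB : Filter.IsBoundedUnder (· ≥ ·) Filter.atTop F := ⟨0, Filter.eventually_map.2 hFevnn⟩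
  obtain ⟨L, hLdef⟩ : ∃ x : ℝ, x = Filter.limsup F Filter.atTop := ⟨_, rfl⟩
  obtain ⟨l, hldef⟩ : ∃ x : ℝ, x = Filter.liminf F Filter.atTop := ⟨_, rfl⟩
  -- generic eventual bounds for c
  have hcub : ∀ U ε : ℝ, 0 < ε → (∀ᶠ t in Filter.atTop, F t ≤ U) →
      (∀ᶠ t in Filter.atTop, c t ≤ U/μM + ε) := by
    intro U ε hε hev
    rcases Filter.eventually_atTop.1 hev with ⟨T0, hT0⟩
    refine ev_le_of_deriv (f := c) (f' := fun t => F t - μM * c t)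
      (T := max T0 1) (c := μM * ε) (by positivity)
      (fun t ht => hcd t (lt_of_lt_of_le one_pos (le_trans (le_max_right _ _) ht))) ?_
    intro t ht hA
    have h1 := hT0 t (le_trans (le_max_left _ _) ht)
    have h2 : μM * (U/μM + ε) = U + μM*ε := by field_simp; try ring
    have h3 : μM * (U/μM + ε) ≤ μM * c t := mul_le_mul_of_nonneg_left hA hμM.le
    show F t - μM * c t ≤ -(μM * ε)
    linarith
  have hclb : ∀ u ε : ℝ, 0 < ε → (∀ᶠ t in Filter.atTop, u ≤ F t) →
      (∀ᶠ t in Filter.atTop, u/μM - ε ≤ c t) := by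
    intro u ε hε hev
    rcases Filter.eventually_atTop.1 hev with ⟨T0, hT0⟩
    refine ev_ge_of_deriv (f := c) (f' := fun t => F t - μM * c t)
      (T := max T0 1) (c := μM * ε) (by positivity)
      (fun t ht => hcd t (lt_of_lt_of_le one_pos (le_trans (le_max_right _ _) ht))) ?_
    intro t ht hA
    have h1 := hT0 t (le_trans (le_max_left _ _) ht)
    have h2 : μM * (u/μM - ε) = u - μM*ε := by field_simp; try ring
    have h3 : μM * c t ≤ μM * (u/μM - ε) := mul_le_mul_of_nonneg_left hA hμM.le
    show μM * ε ≤ F t - μM * c t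
    linarith
  -- key upper estimate for F
  have hkeyUp : ∀ W ε : ℝ, 0 ≤ W → 0 < ε → (∀ᶠ t in Filter.atTop, -W ≤ w t) →
      (∀ᶠ t in Filter.atTop, F t ≤ (lnN + β*W + β*ε)/(β*(q+1))) := by
    intro W ε hW hε hev
    obtain ⟨A, hAdef⟩ : ∃ x : ℝ, x = (lnN + β*W + β*ε)/(β*(q+1)) := ⟨_, rfl⟩
    have hApos : 0 < A := by rw [hAdef]; positivity
    have hAeq : β*((q+1)*A) = lnN + β*W + β*ε := by rw [hAdef]; field_simp
    have hexplt : Real.exp (-(β*ε)) < 1 := by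
      rw [← Real.exp_zero]
      exact Real.exp_lt_exp.2 (by nlinarith)
    rcases Filter.eventually_atTop.1 hev with ⟨T0, hT0⟩
    rw [← hAdef]
    refine ev_le_of_deriv (f := F) (f' := Fd) (T := max T0 0)
      (c := μF * A * (1 - Real.exp (-(β*ε))))
      (mul_pos (mul_pos hμF hApos) (by linarith))
      (fun t ht => hdF' t (le_trans (le_max_right _ _) ht)) ?_
    intro t ht hFA
    have ht0 : (0:ℝ) ≤ t := le_trans (le_max_right _ _) ht
    have hwt := hT0 t (le_trans (le_max_left _ _) ht)
    have hS := hSid t ht0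
    have h4 : lnN - β*(M t + F t) ≤ -(β*ε) := by
      rw [hS]
      have h5 : β*((q+1)*A) ≤ β*((q+1)*F t) := by
        have : (q+1)*A ≤ (q+1)*F t := mul_le_mul_of_nonneg_left hFA (by positivity)
        exact mul_le_mul_of_nonneg_left this hβ.le
      have h6 : -(β*W) ≤ β * w t := by
        have := mul_le_mul_of_nonneg_left hwt hβ.le
        linarith [this]
      linarith [h5, h6, hAeq]
    have h5 : Real.exp (lnN - β*(M t + F t)) ≤ Real.exp (-(β*ε)) := Real.exp_le_exp.2 h4
    rw [hFdid t]
    have hFtnn : 0 ≤ F t := le_trans hApos.le hFA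
    have h8 : μF * F t * (Real.exp (lnN - β*(M t + F t)) - 1)
        ≤ μF * F t * (Real.exp (-(β*ε)) - 1) :=
      mul_le_mul_of_nonneg_left (by linarith) (mul_nonneg hμF.le hFtnn)
    have h9 : μF * F t * (Real.exp (-(β*ε)) - 1) ≤ μF * A * (Real.exp (-(β*ε)) - 1) := by
      have h7 : Real.exp (-(β*ε)) - 1 < 0 := by linarith
      have h9a : F t * (Real.exp (-(β*ε)) - 1) ≤ A * (Real.exp (-(β*ε)) - 1) :=
        mul_le_mul_of_nonpos_right hFA h7.le
      have h9b := mul_le_mul_of_nonneg_left h9a hμF.le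
      linarith [h9b]
    have h10 : μF * A * (Real.exp (-(β*ε)) - 1)
        = -(μF * A * (1 - Real.exp (-(β*ε)))) := by ring
    linarith
  -- key lower estimate for F
  have hkeyLo : ∀ W ε : ℝ, 0 < ε → (∀ᶠ t in Filter.atTop, w t ≤ W) →
      (∀ᶠ t in Filter.atTop, (lnN - β*W - β*ε)/(β*(q+1)) ≤ F t) := by
    intro W ε hε hev
    obtain ⟨A, hAdef⟩ : ∃ x : ℝ, x = (lnN - β*W - β*ε)/(β*(q+1)) := ⟨_, rfl⟩
    have hAeq : β*((q+1)*A) = lnN - β*W - β*ε := by rw [hAdef]; field_simp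
    have hexpgt : 1 < Real.exp (β*ε) := by
      rw [← Real.exp_zero]
      exact Real.exp_lt_exp.2 (by positivity)
    rcases Filter.eventually_atTop.1 hev with ⟨T0, hT0⟩
    rw [← hAdef]
    refine ev_ge_of_deriv_mult (f := F) (f' := Fd) (T := max T0 0)
      (lam := μF * (Real.exp (β*ε) - 1))
      (mul_pos hμF (by linarith))
      (fun t ht => hdF' t (le_trans (le_max_right _ _) ht))
      (fun t ht => hFpos t (le_trans (le_max_right _ _) ht)) ?_
    intro t ht hFA
    have ht0 : (0:ℝ) ≤ t := le_trans (le_max_right _ _) ht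
    have hwt := hT0 t (le_trans (le_max_left _ _) ht)
    have hS := hSid t ht0
    have h4 : β*ε ≤ lnN - β*(M t + F t) := by
      rw [hS]
      have h5 : β*((q+1)*F t) ≤ β*((q+1)*A) := by
        have : (q+1)*F t ≤ (q+1)*A := mul_le_mul_of_nonneg_left hFA (by positivity)
        exact mul_le_mul_of_nonneg_left this hβ.le
      have h6 : β * w t ≤ β*W := mul_le_mul_of_nonneg_left hwt hβ.le
      linarith [h5, h6, hAeq]
    have h5 : Real.exp (β*ε) ≤ Real.exp (lnN - β*(M t + F t)) := Real.exp_le_exp.2 h4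
    rw [hFdid t]
    have hFtpos : 0 < F t := hFpos t ht0
    have h8 : μF * F t * (Real.exp (β*ε) - 1)
        ≤ μF * F t * (Real.exp (lnN - β*(M t + F t)) - 1) :=
      mul_le_mul_of_nonneg_left (by linarith) (mul_nonneg hμF.le hFtpos.le)
    have h9 : μF * (Real.exp (β*ε) - 1) * F t = μF * F t * (Real.exp (β*ε) - 1) := by ring
    linarith
  -- eventual upper bounds on w
  have hwub : ∀ ε : ℝ, 0 < ε → (∀ᶠ t in Filter.atTop, w t ≤ ε) := by
    intro ε hε
    have h1 := hαdec.eventually_lt_const hε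
    filter_upwards [h1, Filter.eventually_ge_atTop (0:ℝ)] with t h2 h3
    rw [hwdef]
    show Real.exp (-μM*t)*(M 0 - q*F 0) - k * c t ≤ ε
    have h4 : 0 ≤ k * c t := mul_nonneg hk (hcnn t h3)
    linarith
  -- persistence
  obtain ⟨m, hmdef⟩ : ∃ x : ℝ,
      x = (lnN - β*(lnN/(4*β)) - β*(lnN/(4*β)))/(β*(q+1)) := ⟨_, rfl⟩
  have hm : 0 < m := by
    have h1 : lnN - β*(lnN/(4*β)) - β*(lnN/(4*β)) = lnN/2 := by field_simp; ring
    rw [hmdef, h1]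
    positivity
  have hFm : ∀ᶠ t in Filter.atTop, m ≤ F t := by
    rw [hmdef]
    exact hkeyLo (lnN/(4*β)) (lnN/(4*β)) (by positivity) (hwub _ (by positivity))
  have hlm : m ≤ l := by
    have hh := Filter.le_liminf_of_le hbddA.isCoboundedUnder_ge hFm
    rw [← hldef] at hh
    exact hh
  have hl_le_L : l ≤ L := by
    rw [hldef, hLdef]
    exact Filter.liminf_le_limsup hbddA hbddB
  have hLpos : 0 < L := lt_of_lt_of_le hm (le_trans hlm hl_le_L)
  have hlpos : 0 < l := lt_of_lt_of_le hm hlm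
  have hq1' : 0 < β*(q+1) := by positivity
  have hBP : 0 < β*((q+1) - k/μM) := mul_pos hβ hP
  -- upper bound: L ≤ Fst
  have hLFst : L ≤ Fst := by
    have key : ∀ ε : ℝ, 0 < ε → β*((q+1) - k/μM)*L ≤ lnN + ε := by
      intro ε hε
      obtain ⟨C, hCdef⟩ : ∃ x : ℝ, x = β*(2 + k + k/μM) + 1 := ⟨_, rfl⟩
      have hCpos : 0 < C := by rw [hCdef]; positivity
      obtain ⟨ε', hε'def⟩ : ∃ x : ℝ, x = min 1 (ε / C) := ⟨_, rfl⟩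
      have hε' : 0 < ε' := by
        rw [hε'def]
        exact lt_min one_pos (div_pos hε hCpos)
      have hε'le : ε' ≤ ε / C := hε'def ▸ min_le_right _ _
      have h6 : ε' * C ≤ ε := by
        rw [← le_div_iff₀ hCpos]
        exact hε'le
      have hFub : ∀ᶠ t in Filter.atTop, F t ≤ L + ε' := by
        have h1 : Filter.limsup F Filter.atTop < L + ε' := by rw [← hLdef]; linarith
        exact (Filter.eventually_lt_of_limsup_lt h1 hbddA).mono (fun t ht => ht.le)
      have hcub' := hcub (L + ε') ε' hε' hFub
      have hαlb : ∀ᶠ t in Filter.atTop, -ε' ≤ Real.exp (-μM*t)*(M 0 - q*F 0) :=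
        (hαdec.eventually_const_lt (by linarith : -ε' < (0:ℝ))).mono (fun t ht => ht.le)
      have hwlb : ∀ᶠ t in Filter.atTop, -(ε' + k*((L+ε')/μM + ε')) ≤ w t := by
        filter_upwards [hcub', hαlb] with t h1 h2
        rw [hwdef]
        show -(ε' + k*((L+ε')/μM + ε')) ≤ Real.exp (-μM*t)*(M 0 - q*F 0) - k * c t
        have h3 : k * c t ≤ k*((L+ε')/μM + ε') := mul_le_mul_of_nonneg_left h1 hk
        linarith
      have hWnn : 0 ≤ ε' + k*((L+ε')/μM + ε') := by
        have h4 : 0 ≤ (L+ε')/μM := div_nonneg (by linarith) hμM.le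
        have h5 : 0 ≤ k*((L+ε')/μM + ε') := mul_nonneg hk (by linarith)
        linarith
      have hup := hkeyUp _ ε' hWnn hε' hwlb
      have hL2 : L ≤ (lnN + β*(ε' + k*((L+ε')/μM + ε')) + β*ε')/(β*(q+1)) := by
        have hh := Filter.limsup_le_of_le hbddB.isCoboundedUnder_le hup
        rw [← hLdef] at hh
        exact hh
      have h5 : L * (β*(q+1)) ≤ lnN + β*(ε' + k*((L+ε')/μM + ε')) + β*ε' :=
        (le_div_iff₀ hq1').1 hL2
      rw [hCdef] at h6
      ring_nf at h5 h6 ⊢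
      linarith [hε']
    by_contra hcon
    push_neg at hcon
    have h8 : 0 < β*((q+1) - k/μM)*L - β*((q+1) - k/μM)*Fst :=
      sub_pos.2 (by exact mul_lt_mul_of_pos_left hcon hBP)
    have h9 := key ((β*((q+1) - k/μM)*L - lnN)/2) (by linarith [hEQ])
    linarith [hEQ]
  -- lower bound: Fst ≤ l
  have hFstl : Fst ≤ l := by
    have key : ∀ ε : ℝ, 0 < ε → lnN - ε ≤ β*((q+1) - k/μM)*l := by
      intro ε hε
      obtain ⟨C, hCdef⟩ : ∃ x : ℝ, x = β*(2 + k + k/μM) + 1 := ⟨_, rfl⟩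
      have hCpos : 0 < C := by rw [hCdef]; positivity
      obtain ⟨ε', hε'def⟩ : ∃ x : ℝ, x = min 1 (ε / C) := ⟨_, rfl⟩
      have hε' : 0 < ε' := by
        rw [hε'def]
        exact lt_min one_pos (div_pos hε hCpos)
      have hε'le : ε' ≤ ε / C := hε'def ▸ min_le_right _ _
      have h6 : ε' * C ≤ ε := by
        rw [← le_div_iff₀ hCpos]
        exact hε'le
      have hFlb : ∀ᶠ t in Filter.atTop, l - ε' ≤ F t := by
        have h1 : l - ε' < Filter.liminf F Filter.atTop := by rw [← hldef]; linarith
        exact (Filter.eventually_lt_of_lt_liminf h1 hbddB).mono (fun t ht => ht.le)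
      have hclb' := hclb (l - ε') ε' hε' hFlb
      have hαub : ∀ᶠ t in Filter.atTop, Real.exp (-μM*t)*(M 0 - q*F 0) ≤ ε' :=
        (hαdec.eventually_lt_const hε').mono (fun t ht => ht.le)
      have hwub' : ∀ᶠ t in Filter.atTop, w t ≤ ε' - k*((l-ε')/μM - ε') := by
        filter_upwards [hclb', hαub] with t h1 h2
        rw [hwdef]
        show Real.exp (-μM*t)*(M 0 - q*F 0) - k * c t ≤ ε' - k*((l-ε')/μM - ε')
        have h3 : k*((l-ε')/μM - ε') ≤ k * c t := mul_le_mul_of_nonneg_left h1 hk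
        linarith
      have hlo := hkeyLo _ ε' hε' hwub'
      have hl2 : (lnN - β*(ε' - k*((l-ε')/μM - ε')) - β*ε')/(β*(q+1)) ≤ l := by
        have hh := Filter.le_liminf_of_le hbddA.isCoboundedUnder_ge hlo
        rw [← hldef] at hh
        exact hh
      have h5 : lnN - β*(ε' - k*((l-ε')/μM - ε')) - β*ε' ≤ l * (β*(q+1)) :=
        (div_le_iff₀ hq1').1 hl2
      rw [hCdef] at h6
      ring_nf at h5 h6 ⊢
      linarith [hε']
    by_contra hcon
    push_neg at hcon
    have h8 : 0 < β*((q+1) - k/μM)*Fst - β*((q+1) - k/μM)*l :=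
      sub_pos.2 (by exact mul_lt_mul_of_pos_left hcon hBP)
    have h9 := key ((lnN - β*((q+1) - k/μM)*l)/2) (by linarith [hEQ])
    linarith [hEQ]
  -- convergence of F
  have hlFst : l = Fst := le_antisymm (le_trans hl_le_L hLFst) hFstl
  have hLFst' : L = Fst := le_antisymm hLFst (le_trans hFstl hl_le_L)
  have hFtend : Filter.Tendsto F Filter.atTop (nhds Fst) := by
    apply tendsto_of_liminf_eq_limsup
    · rw [← hldef]; exact hlFst
    · rw [← hLdef]; exact hLFst'
    · exact hbddA
    · exact hbddB
  -- convergence of c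
  have hctend : Filter.Tendsto c Filter.atTop (nhds (Fst/μM)) := by
    refine Metric.tendsto_atTop.2 (fun ε hε => ?_)
    obtain ⟨δ, hδdef⟩ : ∃ x : ℝ, x = ε*μM/(2*(1+μM)) := ⟨_, rfl⟩
    have hδ : 0 < δ := by rw [hδdef]; positivity
    have h1 : ∀ᶠ t in Filter.atTop, F t ≤ Fst + δ :=
      (hFtend.eventually_lt_const (by linarith : Fst < Fst + δ)).mono (fun t ht => ht.le)
    have h2 : ∀ᶠ t in Filter.atTop, Fst - δ ≤ F t :=
      (hFtend.eventually_const_lt (by linarith : Fst - δ < Fst)).mono (fun t ht => ht.le)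
    have h3 := hcub _ δ hδ h1
    have h4 := hclb _ δ hδ h2
    rcases Filter.eventually_atTop.1 (h3.and h4) with ⟨N, hN⟩
    refine ⟨N, fun t ht => ?_⟩
    obtain ⟨ha, hb⟩ := hN t ht
    have hcalc1 : (Fst+δ)/μM + δ = Fst/μM + ε/2 := by
      rw [hδdef]; field_simp; ring
    have hcalc2 : (Fst-δ)/μM - δ = Fst/μM - ε/2 := by
      rw [hδdef]; field_simp; ring
    rw [Real.dist_eq, abs_sub_lt_iff]
    constructor
    · linarith
    · linarith
  -- convergence of M
  have hMtend : Filter.Tendsto M Filter.atTop (nhds Mst) := by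
    have h1 : Filter.Tendsto (fun t => q*F t + Real.exp (-μM*t)*(M 0 - q*F 0) - k * c t)
        Filter.atTop (nhds (q*Fst + 0 - k*(Fst/μM))) :=
      ((hFtend.const_mul q).add hαdec).sub (hctend.const_mul k)
    have h2 : q*Fst + 0 - k*(Fst/μM) = Mst := by rw [hMstid]; ring
    rw [h2] at h1
    have heq : (fun t => q*F t + Real.exp (-μM*t)*(M 0 - q*F 0) - k * c t)
        =ᶠ[Filter.atTop] M := by
      filter_upwards [Filter.eventually_ge_atTop (0:ℝ)] with t ht
      exact (hrep t ht).symm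
    exact Filter.Tendsto.congr' heq h1
  constructor
  · exact hMstdef ▸ hMtend
  · exact hFstdef ▸ hFtend
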